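/- Let 0 < p < 2 and define q by 1/p = 1/2 + 1/q. Let b be a positive operator (or positive semidefinite matrix) with ‖b‖_q ≤ 1, and y with ‖y‖_2 ≤ 1. Fix β > 1 and for k ∈ ℤ let e_k = χ_{[β^k, β^{k+1})}(b) be the spectral projection of b onto [β^k, β^{k+1}). Set λ_k = ‖y b e_k‖_2 · τ(e_k)^{1/q}. Then (∑_{k∈ℤ} |λ_k|^p)^{1/p} ≤ β. -/

import Mathlib

open scoped ComplexOrder Matrix

/-- The normalized trace `τ` on `n × n` complex matrices. -/
noncomputable def ntr {n : ℕ} (A : Matrix (Fin n) (Fin n) ℂ) : ℝ := A.trace.re / n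

/-- The `L₂`-norm associated with the normalized trace: `‖x‖₂ = τ(x*x)^(1/2)`. -/
noncomputable def nL2 {n : ℕ} (x : Matrix (Fin n) (Fin n) ℂ) : ℝ :=
  Real.sqrt (ntr (xᴴ * x))

/-- The `L_q`-norm of a positive semidefinite matrix w.r.t. the normalized trace:
`‖b‖_q = τ(b^q)^(1/q)`, with `b^q` defined via the functional calculus. -/
noncomputable def nLqPos {n : ℕ} (q : ℝ) {b : Matrix (Fin n) (Fin n) ℂ}
    (hb : b.PosSemidef) : ℝ :=
  (ntr (hb.1.cfc fun t => t ^ q)) ^ (1 / q)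

/-- The spectral projection of a positive matrix `b` onto the interval `[β^k, β^(k+1))`. -/
noncomputable def specProj {n : ℕ} {b : Matrix (Fin n) (Fin n) ℂ} (hb : b.PosSemidef)
    (β : ℝ) (k : ℤ) : Matrix (Fin n) (Fin n) ℂ :=
  hb.1.cfc fun t => if β ^ k ≤ t ∧ t < β ^ (k + 1) then 1 else 0

lemma floor_logb_eq {β : ℝ} (hβ : 1 < β) {k : ℤ} {t : ℝ}
    (h1 : β ^ k ≤ t) (h2 : t < β ^ (k + 1)) : ⌊Real.logb β t⌋ = k := by
  have hβ0 : (0:ℝ) < β := lt_trans one_pos hβ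
  have ht : 0 < t := lt_of_lt_of_le (zpow_pos hβ0 k) h1
  rw [Int.floor_eq_iff]
  refine ⟨?_, ?_⟩
  · rw [Real.le_logb_iff_rpow_le hβ ht, Real.rpow_intCast]
    exact h1
  · have : Real.logb β t < ((k + 1 : ℤ) : ℝ) := by
      rw [Real.logb_lt_iff_lt_rpow hβ ht, Real.rpow_intCast]
      exact h2
    push_cast at this ⊢
    exact this

lemma key_scalar {n : ℕ} (hn : 0 < n) {p q β : ℝ}
    (hp0 : 0 < p) (hp2 : p < 2) (hq : 1 / p = 1 / 2 + 1 / q) (hβ : 1 < β)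
    (μ w : Fin n → ℝ) (hμ : ∀ i, 0 ≤ μ i) (hw : ∀ i, 0 ≤ w i)
    (hμq : (∑ i, μ i ^ q) / (n:ℝ) ≤ 1) (hwsum : (∑ i, w i) / (n:ℝ) ≤ 1) :
    (∑' k : ℤ, |Real.sqrt ((∑ i, w i *
        (μ i * (if β ^ k ≤ μ i ∧ μ i < β ^ (k+1) then (1:ℝ) else 0)) ^ 2) / (n:ℝ)) *
      (((∑ i, (if β ^ k ≤ μ i ∧ μ i < β ^ (k+1) then (1:ℝ) else 0)) / (n:ℝ)) ^ (1/q))| ^ p)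
      ^ (1/p) ≤ β := by
  classical
  have hβ0 : (0:ℝ) < β := lt_trans one_pos hβ
  have hn0 : (0:ℝ) < (n:ℝ) := by exact_mod_cast hn
  have hq0 : 0 < q := by
    have h2 : (1:ℝ)/2 < 1/p := one_div_lt_one_div_of_lt hp0 hp2
    have h1 : (0:ℝ) < 1/q := by linarith
    exact one_div_pos.mp h1
  set g : ℤ → ℝ → ℝ := fun k t => if β ^ k ≤ t ∧ t < β ^ (k+1) then 1 else 0 with hgdef
  have hgnn : ∀ k t, 0 ≤ g k t := by
    intro k t; rw [hgdef]; dsimp only; split <;> norm_num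
  set X : ℤ → ℝ := fun k => (∑ i, w i * (μ i * g k (μ i)) ^ 2) / (n:ℝ) with hX
  set N : ℤ → ℝ := fun k => (∑ i, g k (μ i)) / (n:ℝ) with hN
  set A : ℤ → ℝ := fun k => (∑ i, w i * g k (μ i)) / (n:ℝ) with hA
  set C : ℤ → ℝ := fun k => (∑ i, μ i ^ q * g k (μ i)) / (n:ℝ) with hC
  have hXnn : ∀ k, 0 ≤ X k := by
    intro k; rw [hX]; dsimp only
    apply div_nonneg _ hn0.le
    exact Finset.sum_nonneg fun i _ => mul_nonneg (hw i) (sq_nonneg _)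
  have hNnn : ∀ k, 0 ≤ N k := by
    intro k; rw [hN]; dsimp only
    exact div_nonneg (Finset.sum_nonneg fun i _ => hgnn _ _) hn0.le
  have hAnn : ∀ k, 0 ≤ A k := by
    intro k; rw [hA]; dsimp only
    exact div_nonneg (Finset.sum_nonneg fun i _ => mul_nonneg (hw i) (hgnn _ _)) hn0.le
  have hCnn : ∀ k, 0 ≤ C k := by
    intro k; rw [hC]; dsimp only
    exact div_nonneg (Finset.sum_nonneg fun i _ =>
      mul_nonneg (Real.rpow_nonneg (hμ i) q) (hgnn _ _)) hn0.le
  set a : ℤ → ℝ := fun k => Real.sqrt (A k) with ha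
  set c : ℤ → ℝ := fun k => (C k) ^ (1/q) with hc
  have hann : ∀ k, 0 ≤ a k := fun k => Real.sqrt_nonneg _
  have hcnn : ∀ k, 0 ≤ c k := fun k => Real.rpow_nonneg (hCnn k) _
  show (∑' k : ℤ, |Real.sqrt (X k) * (N k) ^ (1/q)| ^ p) ^ (1/p) ≤ β
  set Λ : ℤ → ℝ := fun k => |Real.sqrt (X k) * (N k) ^ (1/q)| with hΛ
  have hΛnn : ∀ k, 0 ≤ Λ k := fun k => abs_nonneg _
  -- Step 1: pointwise bound
  have step1 : ∀ k, Λ k ≤ β * (a k * c k) := by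
    intro k
    have hz1 : (β : ℝ) ^ (k : ℤ) = β ^ ((k : ℤ) : ℝ) := (Real.rpow_intCast β k).symm
    have hz2 : (β : ℝ) ^ (k + 1 : ℤ) = β ^ (((k : ℤ) : ℝ) + 1) := by
      rw [← Real.rpow_intCast β (k+1)]; push_cast; ring_nf
    have h1 : Real.sqrt (X k) ≤ β ^ (((k:ℤ):ℝ) + 1) * a k := by
      have hnum : ∑ i, w i * (μ i * g k (μ i)) ^ 2
          ≤ (β ^ (((k:ℤ):ℝ) + 1)) ^ 2 * ∑ i, w i * g k (μ i) := by
        rw [Finset.mul_sum]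
        apply Finset.sum_le_sum
        intro i _
        rw [hgdef]; dsimp only
        by_cases hcond : β ^ (k:ℤ) ≤ μ i ∧ μ i < β ^ (k+1:ℤ)
        · rw [if_pos hcond, mul_one, mul_one]
          have hlt : μ i ≤ β ^ (((k:ℤ):ℝ) + 1) := by rw [← hz2]; exact hcond.2.le
          calc w i * μ i ^ 2 ≤ w i * (β ^ (((k:ℤ):ℝ) + 1)) ^ 2 := by
                apply mul_le_mul_of_nonneg_left _ (hw i)
                exact pow_le_pow_left₀ (hμ i) hlt 2
            _ = (β ^ (((k:ℤ):ℝ) + 1)) ^ 2 * w i := by ring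
        · rw [if_neg hcond]
          simp
      have hXle : X k ≤ (β ^ (((k:ℤ):ℝ) + 1)) ^ 2 * A k := by
        rw [hX, hA]; dsimp only
        rw [← mul_div_assoc]
        gcongr
      calc Real.sqrt (X k) ≤ Real.sqrt ((β ^ (((k:ℤ):ℝ) + 1)) ^ 2 * A k) :=
            Real.sqrt_le_sqrt hXle
        _ = β ^ (((k:ℤ):ℝ) + 1) * a k := by
            rw [Real.sqrt_mul (sq_nonneg _), Real.sqrt_sq (Real.rpow_nonneg hβ0.le _), ha]
    have h2 : (N k) ^ (1/q) ≤ β ^ (-((k:ℤ):ℝ)) * c k := by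
      have hnum : ∑ i, g k (μ i) ≤ β ^ (-((k:ℤ):ℝ) * q) * ∑ i, μ i ^ q * g k (μ i) := by
        rw [Finset.mul_sum]
        apply Finset.sum_le_sum
        intro i _
        rw [hgdef]; dsimp only
        by_cases hcond : β ^ (k:ℤ) ≤ μ i ∧ μ i < β ^ (k+1:ℤ)
        · rw [if_pos hcond, mul_one]
          have hμi : β ^ (((k:ℤ):ℝ)) ≤ μ i := by rw [← hz1]; exact hcond.1
          have h3 : β ^ (((k:ℤ):ℝ) * q) ≤ μ i ^ q := by
            rw [Real.rpow_mul hβ0.le]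
            exact Real.rpow_le_rpow (Real.rpow_nonneg hβ0.le _) hμi hq0.le
          have h4 : (1:ℝ) = β ^ (-((k:ℤ):ℝ) * q) * β ^ (((k:ℤ):ℝ) * q) := by
            rw [← Real.rpow_add hβ0,
              show -((k:ℤ):ℝ) * q + ((k:ℤ):ℝ) * q = 0 by ring, Real.rpow_zero]
          rw [h4]
          exact mul_le_mul_of_nonneg_left h3 (Real.rpow_nonneg hβ0.le _)
        · rw [if_neg hcond]
          have : (0:ℝ) ≤ μ i ^ q * 0 := by simp
          simpa using mul_nonneg (Real.rpow_nonneg hβ0.le _) (by simp : (0:ℝ) ≤ μ i ^ q * 0)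
      have hNle : N k ≤ β ^ (-((k:ℤ):ℝ) * q) * C k := by
        rw [hN, hC]; dsimp only
        rw [← mul_div_assoc]
        gcongr
      calc (N k) ^ (1/q) ≤ (β ^ (-((k:ℤ):ℝ) * q) * C k) ^ (1/q) :=
            Real.rpow_le_rpow (hNnn k) hNle (by positivity)
        _ = (β ^ (-((k:ℤ):ℝ) * q)) ^ (1/q) * c k := by
            rw [Real.mul_rpow (Real.rpow_nonneg hβ0.le _) (hCnn k), hc]
        _ = β ^ (-((k:ℤ):ℝ)) * c k := by
            rw [← Real.rpow_mul hβ0.le,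
              show -((k:ℤ):ℝ) * q * (1/q) = -((k:ℤ):ℝ) * (q * (1/q)) by ring,
              mul_one_div, div_self hq0.ne', mul_one]
    have hmul : Λ k ≤ (β ^ (((k:ℤ):ℝ) + 1) * a k) * (β ^ (-((k:ℤ):ℝ)) * c k) := by
      rw [hΛ]; dsimp only
      rw [abs_of_nonneg (mul_nonneg (Real.sqrt_nonneg _) (Real.rpow_nonneg (hNnn k) _))]
      exact mul_le_mul h1 h2 (Real.rpow_nonneg (hNnn k) _)
        (mul_nonneg (Real.rpow_nonneg hβ0.le _) (hann k))
    calc Λ k ≤ (β ^ (((k:ℤ):ℝ) + 1) * a k) * (β ^ (-((k:ℤ):ℝ)) * c k) := hmul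
      _ = (β ^ (((k:ℤ):ℝ) + 1) * β ^ (-((k:ℤ):ℝ))) * (a k * c k) := by ring
      _ = β * (a k * c k) := by
          rw [← Real.rpow_add hβ0,
            show ((k:ℤ):ℝ) + 1 + -((k:ℤ):ℝ) = 1 by ring, Real.rpow_one]
  -- Step 2: finite support
  set K : Finset ℤ := Finset.image (fun i => ⌊Real.logb β (μ i)⌋) Finset.univ with hK
  have hgK : ∀ k, k ∉ K → ∀ i, g k (μ i) = 0 := by
    intro k hk i
    rw [hgdef]; dsimp only
    by_cases hcond : β ^ (k:ℤ) ≤ μ i ∧ μ i < β ^ (k+1:ℤ)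
    · exact absurd (Finset.mem_image.mpr ⟨i, Finset.mem_univ i,
        floor_logb_eq hβ hcond.1 hcond.2⟩) hk
    · rw [if_neg hcond]
  have hΛ0 : ∀ k ∉ K, Λ k ^ p = 0 := by
    intro k hk
    have hNk : N k = 0 := by
      rw [hN]; dsimp only
      rw [Finset.sum_eq_zero fun i _ => hgK k hk i, zero_div]
    have hzero : Λ k = 0 := by
      rw [hΛ]; dsimp only
      rw [hNk, Real.zero_rpow (by positivity), mul_zero, abs_zero]
    rw [hzero, Real.zero_rpow hp0.ne']
  have htsum : ∑' k : ℤ, Λ k ^ p = ∑ k ∈ K, Λ k ^ p := tsum_eq_sum hΛ0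
  -- disjointness
  have hdisj : ∀ t : ℝ, ∑ k ∈ K, g k t ≤ 1 := by
    intro t
    calc ∑ k ∈ K, g k t ≤ ∑ k ∈ K, (if k = ⌊Real.logb β t⌋ then (1:ℝ) else 0) := by
          apply Finset.sum_le_sum
          intro k _
          rw [hgdef]; dsimp only
          by_cases hcond : β ^ (k:ℤ) ≤ t ∧ t < β ^ (k+1:ℤ)
          · rw [if_pos hcond, if_pos (floor_logb_eq hβ hcond.1 hcond.2).symm]
          · rw [if_neg hcond]
            split <;> norm_num
      _ ≤ 1 := by
          rw [Finset.sum_ite_eq' K _ (fun _ => (1:ℝ))]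
          split <;> norm_num
  -- the two sum bounds
  have hA1 : ∑ k ∈ K, A k ≤ 1 := by
    have heq : ∑ k ∈ K, A k = (∑ i, w i * ∑ k ∈ K, g k (μ i)) / (n:ℝ) := by
      rw [hA]; dsimp only
      rw [← Finset.sum_div]
      congr 1
      rw [Finset.sum_comm]
      exact Finset.sum_congr rfl fun i _ => (Finset.mul_sum _ _ _).symm
    rw [heq]
    refine le_trans ?_ hwsum
    gcongr with i _
    exact mul_le_of_le_one_right (hw i) (hdisj (μ i))
  have hC1 : ∑ k ∈ K, C k ≤ 1 := by
    have heq : ∑ k ∈ K, C k = (∑ i, μ i ^ q * ∑ k ∈ K, g k (μ i)) / (n:ℝ) := by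
      rw [hC]; dsimp only
      rw [← Finset.sum_div]
      congr 1
      rw [Finset.sum_comm]
      exact Finset.sum_congr rfl fun i _ => (Finset.mul_sum _ _ _).symm
    rw [heq]
    refine le_trans ?_ hμq
    gcongr with i _
    exact mul_le_of_le_one_right (Real.rpow_nonneg (hμ i) q) (hdisj (μ i))
  -- Hoelder
  have hpq1 : p/2 + p/q = 1 := by
    have h : p * (1/2 + 1/q) = p * (1/p) := by rw [hq]
    rw [mul_one_div, div_self hp0.ne'] at h
    calc p/2 + p/q = p * (1/2 + 1/q) := by ring
      _ = 1 := h
  have hconj : Real.HolderConjugate (2/p) (q/p) := by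
    constructor
    · rw [inv_div, inv_div, inv_one]; linarith
    · positivity
    · positivity
  have hH := Real.inner_le_Lp_mul_Lq_of_nonneg (s := K) hconj
      (f := fun k => a k ^ p) (g := fun k => c k ^ p)
      (fun k _ => Real.rpow_nonneg (hann k) p) (fun k _ => Real.rpow_nonneg (hcnn k) p)
  have hexp1 : ∀ k : ℤ, (a k ^ p) ^ (2/p) = A k := by
    intro k
    rw [← Real.rpow_mul (hann k), show p * (2/p) = 2 by field_simp,
      show (2:ℝ) = ((2:ℕ):ℝ) by norm_num, Real.rpow_natCast, ha]
    exact Real.sq_sqrt (hAnn k)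
  have hexp2 : ∀ k : ℤ, (c k ^ p) ^ (q/p) = C k := by
    intro k
    rw [← Real.rpow_mul (hcnn k), show p * (q/p) = q by field_simp, hc]
    dsimp only
    rw [← Real.rpow_mul (hCnn k), show 1/q * q = 1 by field_simp, Real.rpow_one]
  calc (∑' k : ℤ, Λ k ^ p) ^ (1/p) = (∑ k ∈ K, Λ k ^ p) ^ (1/p) := by rw [htsum]
    _ ≤ (β ^ p) ^ (1/p) := by
        apply Real.rpow_le_rpow
          (Finset.sum_nonneg fun k _ => Real.rpow_nonneg (hΛnn k) p) ?_ (by positivity)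
        calc ∑ k ∈ K, Λ k ^ p ≤ ∑ k ∈ K, (β * (a k * c k)) ^ p :=
              Finset.sum_le_sum fun k _ => Real.rpow_le_rpow (hΛnn k) (step1 k) hp0.le
          _ = β ^ p * ∑ k ∈ K, a k ^ p * c k ^ p := by
              rw [Finset.mul_sum]
              refine Finset.sum_congr rfl fun k _ => ?_
              rw [Real.mul_rpow hβ0.le (mul_nonneg (hann k) (hcnn k)),
                  Real.mul_rpow (hann k) (hcnn k)]
          _ ≤ β ^ p * ((∑ k ∈ K, A k) ^ (p/2) * (∑ k ∈ K, C k) ^ (p/q)) := by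
              apply mul_le_mul_of_nonneg_left ?_ (Real.rpow_nonneg hβ0.le p)
              calc ∑ k ∈ K, a k ^ p * c k ^ p
                  ≤ (∑ k ∈ K, (a k ^ p) ^ (2/p)) ^ (1/(2/p))
                    * (∑ k ∈ K, (c k ^ p) ^ (q/p)) ^ (1/(q/p)) := hH
                _ = (∑ k ∈ K, A k) ^ (p/2) * (∑ k ∈ K, C k) ^ (p/q) := by
                    rw [one_div_div, one_div_div]
                    congr 1
                    · congr 1
                      exact Finset.sum_congr rfl fun k _ => hexp1 k
                    · congr 1
                      exact Finset.sum_congr rfl fun k _ => hexp2 k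
          _ ≤ β ^ p * (1 * 1) := by
              apply mul_le_mul_of_nonneg_left ?_ (Real.rpow_nonneg hβ0.le p)
              apply mul_le_mul ?_ ?_
                (Real.rpow_nonneg (Finset.sum_nonneg fun k _ => hCnn k) _) zero_le_one
              · exact Real.rpow_le_one (Finset.sum_nonneg fun k _ => hAnn k) hA1
                  (by positivity)
              · exact Real.rpow_le_one (Finset.sum_nonneg fun k _ => hCnn k) hC1
                  (by positivity)
          _ = β ^ p := by ring
    _ = β := by
        rw [← Real.rpow_mul hβ0.le, show p * (1/p) = 1 by field_simp, Real.rpow_one]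

lemma ntr_cfc {n : ℕ} {b : Matrix (Fin n) (Fin n) ℂ} (hb : b.IsHermitian) (f : ℝ → ℝ) :
    ntr (hb.cfc f) = (∑ i, f (hb.eigenvalues i)) / n := by
  have hU : star (hb.eigenvectorUnitary : Matrix (Fin n) (Fin n) ℂ) *
      (hb.eigenvectorUnitary : Matrix (Fin n) (Fin n) ℂ) = 1 :=
    Unitary.coe_star_mul_self hb.eigenvectorUnitary
  unfold ntr Matrix.IsHermitian.cfc
  rw [Unitary.conjStarAlgAut_apply, Matrix.trace_mul_cycle, hU, Matrix.one_mul, Matrix.trace_diagonal]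
  simp only [Function.comp_apply]
  norm_cast

/-- Key estimate in the decomposition of a `(p,2)_c`-crude atom `a = yb` into
`(p,2)_c`-atoms: with `e_k = χ_{[β^k, β^(k+1))}(b)` and
`λ_k = ‖y b e_k‖₂ · τ(e_k)^(1/q)`, one has `(∑_{k∈ℤ} |λ_k|^p)^(1/p) ≤ β`. -/
theorem crude_atom_coefficient_estimate {n : ℕ} (hn : 0 < n) {p q β : ℝ}
    (hp0 : 0 < p) (hp2 : p < 2) (hq : 1 / p = 1 / 2 + 1 / q) (hβ : 1 < β)
    {b y : Matrix (Fin n) (Fin n) ℂ} (hb : b.PosSemidef)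
    (hbq : nLqPos q hb ≤ 1) (hy : nL2 y ≤ 1) :
    (∑' k : ℤ, |nL2 (y * b * specProj hb β k) * (ntr (specProj hb β k)) ^ (1 / q)| ^ p)
        ^ (1 / p) ≤ β := by
  classical
  have hβ0 : (0:ℝ) < β := lt_trans one_pos hβ
  have hn0 : (0:ℝ) < (n:ℝ) := by exact_mod_cast hn
  have hq0 : 0 < q := by
    have h2 : (1:ℝ)/2 < 1/p := one_div_lt_one_div_of_lt hp0 hp2
    have h1 : (0:ℝ) < 1/q := by linarith
    exact one_div_pos.mp h1
  set μ : Fin n → ℝ := hb.1.eigenvalues with hμdef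
  have hμnn : ∀ i, 0 ≤ μ i := fun i => hb.eigenvalues_nonneg i
  set U : Matrix (Fin n) (Fin n) ℂ := (hb.1.eigenvectorUnitary : Matrix (Fin n) (Fin n) ℂ) with hUdef
  have hU1 : star U * U = 1 := Unitary.coe_star_mul_self _
  have hU2 : U * star U = 1 := Unitary.coe_mul_star_self _
  set z : Matrix (Fin n) (Fin n) ℂ := y * U with hzdef
  set w : Fin n → ℝ := fun i => ((zᴴ * z) i i).re with hwdef
  have hdiag : ∀ i, (zᴴ * z) i i = ∑ j, (starRingEnd ℂ) (z j i) * z j i := by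
    intro i; simp [Matrix.mul_apply, Matrix.conjTranspose_apply]
  have hwnn : ∀ i, 0 ≤ w i := by
    intro i
    rw [hwdef]; dsimp only
    rw [hdiag i, Complex.re_sum]
    apply Finset.sum_nonneg
    intro j _
    rw [mul_comm, Complex.mul_conj]
    simp [Complex.normSq_nonneg]
  have htr_z : (zᴴ * z).trace = (yᴴ * y).trace := by
    rw [hzdef, Matrix.conjTranspose_mul, Matrix.trace_mul_comm]
    have h : (y * U) * (Uᴴ * yᴴ) = y * yᴴ := by
      rw [Matrix.mul_assoc, ← Matrix.mul_assoc U, ← Matrix.star_eq_conjTranspose U, hU2,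
        Matrix.one_mul]
    rw [h, Matrix.trace_mul_comm]
  have hwsumtr : (∑ i, w i) = (yᴴ * y).trace.re := by
    rw [← htr_z, Matrix.trace, Complex.re_sum]
    simp [hwdef, Matrix.diag_apply]
  have hwsum : (∑ i, w i) / (n:ℝ) ≤ 1 := by
    have hx : 0 ≤ (∑ i, w i)/(n:ℝ) := div_nonneg (Finset.sum_nonneg fun i _ => hwnn i) hn0.le
    have hs : Real.sqrt ((∑ i, w i)/(n:ℝ)) ≤ 1 := by
      have h : nL2 y = Real.sqrt ((∑ i, w i)/(n:ℝ)) := by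
        unfold nL2 ntr
        rw [hwsumtr]
      rw [← h]; exact hy
    calc (∑ i, w i)/(n:ℝ)
        = Real.sqrt ((∑ i, w i)/(n:ℝ)) * Real.sqrt ((∑ i, w i)/(n:ℝ)) :=
          (Real.mul_self_sqrt hx).symm
      _ ≤ 1 * 1 := mul_le_mul hs hs (Real.sqrt_nonneg _) zero_le_one
      _ = 1 := mul_one 1
  have hμq : (∑ i, μ i ^ q)/(n:ℝ) ≤ 1 := by
    have h := hbq
    unfold nLqPos at h
    rw [ntr_cfc] at h
    have hnn : 0 ≤ (∑ i, μ i ^ q)/(n:ℝ) :=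
      div_nonneg (Finset.sum_nonneg fun i _ => Real.rpow_nonneg (hμnn i) q) hn0.le
    have h2 := Real.rpow_le_rpow (Real.rpow_nonneg hnn _) h hq0.le
    rw [Real.one_rpow, ← Real.rpow_mul hnn, one_div_mul_cancel hq0.ne', Real.rpow_one] at h2
    exact h2
  have conj_mul : ∀ d e : Fin n → ℂ,
      (U * Matrix.diagonal d * star U) * (U * Matrix.diagonal e * star U)
        = U * Matrix.diagonal (fun i => d i * e i) * star U := by
    intro d e
    have h : (U * Matrix.diagonal d * star U) * (U * Matrix.diagonal e * star U)
        = U * (Matrix.diagonal d * ((star U * U) * Matrix.diagonal e)) * star U := by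
      simp only [Matrix.mul_assoc]
    rw [h, hU1, Matrix.one_mul, Matrix.diagonal_mul_diagonal]
  have hproj : ∀ k : ℤ, specProj hb β k
      = U * Matrix.diagonal
          (fun i => (((if β^k ≤ μ i ∧ μ i < β^(k+1) then (1:ℝ) else 0) : ℝ) : ℂ)) * star U := by
    intro k; rfl
  have hb_eq : b = U * Matrix.diagonal (fun i => ((μ i : ℝ) : ℂ)) * star U := by
    have h := hb.1.spectral_theorem
    rw [Unitary.conjStarAlgAut_apply] at h
    exact h
  have hprod : ∀ k : ℤ, y * b * specProj hb β k
      = z * Matrix.diagonal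
          (fun i => (((μ i * (if β^k ≤ μ i ∧ μ i < β^(k+1) then (1:ℝ) else 0)) : ℝ) : ℂ))
        * star U := by
    intro k
    conv_lhs => rw [hproj k]; rw [hb_eq]
    rw [Matrix.mul_assoc y (U * Matrix.diagonal (fun i => ((μ i : ℝ) : ℂ)) * star U)
      (U * Matrix.diagonal _ * star U), conj_mul]
    simp only [← Matrix.mul_assoc]
    rw [← hzdef]
    simp only [Complex.ofReal_mul]
  have hnl2 : ∀ d : Fin n → ℝ,
      ntr ((z * Matrix.diagonal (fun i => ((d i : ℝ) : ℂ)) * star U)ᴴ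
          * (z * Matrix.diagonal (fun i => ((d i : ℝ) : ℂ)) * star U))
        = (∑ i, w i * (d i)^2) / (n:ℝ) := by
    intro d
    have hsU : (star U)ᴴ = U := by rw [← Matrix.star_eq_conjTranspose, star_star]
    have h1 : (z * Matrix.diagonal (fun i => ((d i : ℝ):ℂ)) * star U)ᴴ
        * (z * Matrix.diagonal (fun i => ((d i:ℝ):ℂ)) * star U)
        = U * ((Matrix.diagonal (fun i => ((d i:ℝ):ℂ)))ᴴ * ((zᴴ * z)
            * Matrix.diagonal (fun i => ((d i:ℝ):ℂ)))) * star U := by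
      simp only [Matrix.conjTranspose_mul, hsU, Matrix.mul_assoc]
    rw [h1]
    unfold ntr
    rw [Matrix.trace_mul_cycle, hU1, Matrix.one_mul]
    rw [Matrix.diagonal_conjTranspose]
    have h2 : (Matrix.diagonal (star fun i => ((d i:ℝ):ℂ)) * ((zᴴ * z)
        * Matrix.diagonal (fun i => ((d i:ℝ):ℂ)))).trace
        = ∑ i, ((d i:ℝ):ℂ) * (((zᴴ*z) i i) * ((d i:ℝ):ℂ)) := by
      rw [Matrix.trace]
      apply Finset.sum_congr rfl
      intro i _
      rw [Matrix.diag_apply, Matrix.diagonal_mul, Matrix.mul_diagonal]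
      simp [Complex.conj_ofReal]
    rw [h2, Complex.re_sum]
    congr 1
    apply Finset.sum_congr rfl
    intro i _
    have h3 : ((d i:ℝ):ℂ) * (((zᴴ*z) i i) * ((d i:ℝ):ℂ))
        = ((d i * d i : ℝ):ℂ) * ((zᴴ*z) i i) := by
      push_cast; ring
    rw [h3, Complex.re_ofReal_mul, hwdef]
    dsimp only
    ring
  have key := key_scalar hn hp0 hp2 hq hβ μ w hμnn hwnn hμq hwsum
  refine le_trans (le_of_eq (congrArg (· ^ (1/p)) ?_)) key
  apply tsum_congr
  intro k
  have e1 : nL2 (y * b * specProj hb β k)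
      = Real.sqrt ((∑ i, w i *
          (μ i * (if β^k ≤ μ i ∧ μ i < β^(k+1) then (1:ℝ) else 0))^2)/(n:ℝ)) := by
    unfold nL2
    rw [hprod k]
    rw [hnl2 (fun i => μ i * (if β^k ≤ μ i ∧ μ i < β^(k+1) then (1:ℝ) else 0))]
  have e2 : ntr (specProj hb β k)
      = (∑ i, (if β^k ≤ μ i ∧ μ i < β^(k+1) then (1:ℝ) else 0))/(n:ℝ) := by
    show ntr (hb.1.cfc _) = _
    rw [ntr_cfc]
  rw [e1, e2]
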